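/- In the final Best-Fit packing of items with sizes in (1/4, 1/2], at most one bin contains exactly two small items (items of size in (1/4, 1/3]) and no other item. -/

import Mathlib

/-- One step of Best-Fit. -/
def BFStep (bins : List (List ℝ)) (x : ℝ) (bins' : List (List ℝ)) : Prop :=
  (∃ i : ℕ, ∃ h : i < bins.length,
      (bins[i]'h).sum + x ≤ 1 ∧
      (∀ j : ℕ, ∀ hj : j < bins.length,
        (bins[j]'hj).sum + x ≤ 1 → (bins[j]'hj).sum ≤ (bins[i]'h).sum) ∧
      bins' = bins.set i (x :: (bins[i]'h)))
  ∨ ((∀ b ∈ bins, 1 < b.sum + x) ∧ bins' = bins ++ [[x]])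

/-- `BFFrom bins I final`: Best-Fit starting from `bins` processes `I` and ends with `final`. -/
inductive BFFrom : List (List ℝ) → List ℝ → List (List ℝ) → Prop
  | nil (bins : List (List ℝ)) : BFFrom bins [] bins
  | cons {bins bins' final : List (List ℝ)} {x : ℝ} {xs : List ℝ} :
      BFStep bins x bins' → BFFrom bins' xs final → BFFrom bins (x :: xs) final

noncomputable def ssP : List ℝ → Bool :=
  fun b => b.length == 2 && b.all (fun y => decide (y ≤ (1 / 3 : ℝ)))

private lemma ssP_iff {b : List ℝ} :
    ssP b = true ↔ b.length = 2 ∧ ∀ y ∈ b, y ≤ (1 / 3 : ℝ) := by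
  simp [ssP, List.all_eq_true]

private lemma ss_sum_le {b : List ℝ} (h : ssP b = true) : b.sum ≤ 2 / 3 := by
  rw [ssP_iff] at h
  obtain ⟨a, c, rfl⟩ := List.length_eq_two.mp h.1
  have ha := h.2 a (by simp)
  have hc := h.2 c (by simp)
  simp only [List.sum_cons, List.sum_nil]
  linarith

private lemma ss_sum_gt {b : List ℝ} (h : ssP b = true)
    (hb : ∀ y ∈ b, (1 / 4 : ℝ) < y) : (1 / 2 : ℝ) < b.sum := by
  rw [ssP_iff] at h
  obtain ⟨a, c, rfl⟩ := List.length_eq_two.mp h.1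
  have ha := hb a (by simp)
  have hc := hb c (by simp)
  simp only [List.sum_cons, List.sum_nil]
  linarith

/-- The invariant: all items are large, and at most one SS-bin. -/
def BFInv (bins : List (List ℝ)) : Prop :=
  (∀ b ∈ bins, ∀ y ∈ b, (1 / 4 : ℝ) < y) ∧ bins.countP ssP ≤ 1

private lemma countP_split (l : List (List ℝ)) (i : ℕ) (h : i < l.length) :
    l.countP ssP = (l.take i).countP ssP + ((l[i]'h :: l.drop (i + 1)).countP ssP) := by
  conv_lhs => rw [← List.take_append_drop i l, ← List.getElem_cons_drop h]
  rw [List.countP_append]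

private lemma step_inv {bins bins' : List (List ℝ)} {x : ℝ}
    (hx1 : (1 / 4 : ℝ) < x) (hx2 : x ≤ (1 / 2 : ℝ))
    (hstep : BFStep bins x bins') (hinv : BFInv bins) : BFInv bins' := by
  obtain ⟨hlarge, hcount⟩ := hinv
  rcases hstep with ⟨i, hi, hfit, hbest, rfl⟩ | ⟨hfull, rfl⟩
  · constructor
    · intro b hb y hy
      rcases List.mem_or_eq_of_mem_set hb with hb' | rfl
      · exact hlarge b hb' y hy
      · rcases List.mem_cons.mp hy with rfl | hy
        · exact hx1
        · exact hlarge _ (List.getElem_mem hi) y hy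
    · have hsplit := countP_split bins i hi
      rw [List.set_eq_take_cons_drop _ hi, List.countP_append]
      simp only [List.countP_cons] at *
      by_cases hnew : ssP (x :: bins[i]'hi) = true
      · -- new bin at i is an SS-bin; old bin i was a singleton
        have hold : ssP (bins[i]'hi) = false := by
          rw [ssP_iff] at hnew
          simp only [List.length_cons] at hnew
          rw [Bool.eq_false_iff]
          intro hc
          rw [ssP_iff] at hc
          omega
        -- show no other bin is SS
        have hnone : ∀ j : ℕ, ∀ hj : j < bins.length, ssP (bins[j]'hj) = false := by
          intro j hj
          rw [Bool.eq_false_iff]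
          intro hss
          have h1 : (bins[j]'hj).sum ≤ 2 / 3 := ss_sum_le hss
          have h2 : (1 / 2 : ℝ) < (bins[j]'hj).sum :=
            ss_sum_gt hss (hlarge _ (List.getElem_mem hj))
          have hxle : x ≤ 1 / 3 := by
            rw [ssP_iff] at hnew
            exact hnew.2 x (by simp)
          have h3 : (bins[j]'hj).sum ≤ (bins[i]'hi).sum :=
            hbest j hj (by linarith)
          have h4 : (bins[i]'hi).sum ≤ 1 / 3 := by
            rw [ssP_iff] at hnew
            obtain ⟨a, ha⟩ : ∃ a, bins[i]'hi = [a] := by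
              have := hnew.1
              simp only [List.length_cons] at this
              exact List.length_eq_one_iff.mp (by omega)
            rw [ha]
            simpa using hnew.2 a (by simp [ha])
          linarith
        have htake : (bins.take i).countP ssP = 0 := by
          rw [List.countP_eq_zero]
          intro b hb
          obtain ⟨j, hj, rfl⟩ := List.getElem_of_mem hb
          have hj' : j < bins.length := lt_of_lt_of_le hj (by simp [List.length_take])
          rw [List.getElem_take]
          simp [hnone j hj']
        have hdrop : (bins.drop (i + 1)).countP ssP = 0 := by
          rw [List.countP_eq_zero]
          intro b hb
          obtain ⟨j, hj, rfl⟩ := List.getElem_of_mem hb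
          have hj' : i + 1 + j < bins.length := by
            simp [List.length_drop] at hj; omega
          rw [List.getElem_drop]
          simp [hnone _ hj']
        simp [hnew, htake, hdrop]
      · rw [Bool.not_eq_true] at hnew
        simp only [hnew, Bool.false_eq_true, if_false, add_zero] at *
        rw [hsplit] at hcount
        split at hcount <;> omega
  · constructor
    · intro b hb y hy
      rcases List.mem_append.mp hb with hb' | hb'
      · exact hlarge b hb' y hy
      · simp only [List.mem_singleton] at hb'
        subst hb'
        rcases List.mem_cons.mp hy with rfl | hy
        · exact hx1
        · simp at hy
    · rw [List.countP_append]
      have : ssP [x] = false := by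
        rw [Bool.eq_false_iff]; intro hc; rw [ssP_iff] at hc; simp at hc
      simpa [this] using hcount

private lemma bf_inv : ∀ {bins0 : List (List ℝ)} {I : List ℝ} {bins : List (List ℝ)},
    BFFrom bins0 I bins → (∀ x ∈ I, (1 / 4 : ℝ) < x ∧ x ≤ 1 / 2) → BFInv bins0 → BFInv bins := by
  intro bins0 I bins h
  induction h with
  | nil => exact fun _ h => h
  | cons hstep _ ih =>
    intro hI hinv
    exact ih (fun y hy => hI y (List.mem_cons_of_mem _ hy))
      (step_inv (hI _ List.mem_cons_self).1 (hI _ List.mem_cons_self).2 hstep hinv)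

/-- In the final Best-Fit packing of items with sizes in (1/4,1/2], at most one bin
consists of exactly two small items (sizes in (1/4,1/3]). -/
theorem bf_at_most_one_SS_bin (I : List ℝ)
    (hI : ∀ x ∈ I, 1 / 4 < x ∧ x ≤ 1 / 2)
    (bins : List (List ℝ)) (hbf : BFFrom [] I bins) :
    bins.countP (fun b => b.length == 2 && b.all (fun y => decide (y ≤ (1 / 3 : ℝ)))) ≤ 1 := by
  exact (bf_inv hbf hI ⟨by simp, by simp⟩).2
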